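/- For ADMM iterates (U^k, V^k, P^k) as in the context, ‖P^{k+1} − P^k‖ ≤ L_h ‖V^{k+1} − V^k‖ for every k ≥ 1. -/

import Mathlib

open scoped RealInnerProductSpace
open Filter

/-- Matrix–vector product `H U` as a map between Euclidean spaces. -/
noncomputable def mvec {M N : ℕ} (H : Matrix (Fin N) (Fin M) ℝ)
    (U : EuclideanSpace ℝ (Fin M)) : EuclideanSpace ℝ (Fin N) :=
  (WithLp.equiv 2 (Fin N → ℝ)).symm (H.mulVec (WithLp.equiv 2 (Fin M → ℝ) U))

/-- The augmented Lagrangian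
`L(U,V,P) = f(U) + h(V) + ⟨P, V − HU⟩ + (ρ/2)‖V − HU‖²`. -/
noncomputable def lagr {M N : ℕ} (H : Matrix (Fin N) (Fin M) ℝ) (ρ : ℝ)
    (f : EuclideanSpace ℝ (Fin M) → ℝ) (h : EuclideanSpace ℝ (Fin N) → ℝ)
    (U : EuclideanSpace ℝ (Fin M)) (V P : EuclideanSpace ℝ (Fin N)) : ℝ :=
  f U + h V + ⟪P, V - mvec H U⟫ + (ρ / 2) * ‖V - mvec H U‖ ^ 2

/-- The box constraint set `K = {U : 0 ≤ Uᵢ ≤ 1 for all i}`. -/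
def Kbox (M : ℕ) : Set (EuclideanSpace ℝ (Fin M)) := {U | ∀ i, 0 ≤ U i ∧ U i ≤ 1}

/-- First-order condition for the `V`-minimization step. -/
lemma grad_eq_zero_of_min {N : ℕ} (ρ : ℝ) (h : EuclideanSpace ℝ (Fin N) → ℝ)
    (hdiff : Differentiable ℝ h) (c P V₀ : EuclideanSpace ℝ (Fin N)) (a : ℝ)
    (hmin : ∀ V' : EuclideanSpace ℝ (Fin N),
      a + h V₀ + ⟪P, V₀ - c⟫ + (ρ / 2) * ‖V₀ - c‖ ^ 2 ≤
      a + h V' + ⟪P, V' - c⟫ + (ρ / 2) * ‖V' - c‖ ^ 2) :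
    gradient h V₀ + P + ρ • (V₀ - c) = 0 := by
  set g : EuclideanSpace ℝ (Fin N) → ℝ :=
    fun V => a + h V + ⟪P, V - c⟫ + (ρ / 2) * ‖V - c‖ ^ 2 with hg
  have hsub : HasFDerivAt (fun V : EuclideanSpace ℝ (Fin N) => V - c)
      (ContinuousLinearMap.id ℝ _) V₀ := (hasFDerivAt_id V₀).sub_const c
  have h1 : HasFDerivAt h ((InnerProductSpace.toDual ℝ _) (gradient h V₀)) V₀ :=
    (hdiff V₀).hasGradientAt.hasFDerivAt
  have h2 : HasFDerivAt (fun V : EuclideanSpace ℝ (Fin N) => ⟪P, V - c⟫)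
      (innerSL ℝ P) V₀ := by
    have : HasFDerivAt (fun V : EuclideanSpace ℝ (Fin N) => ⟪P, V⟫ - ⟪P, c⟫)
        (innerSL ℝ P) V₀ := (innerSL ℝ P).hasFDerivAt.sub_const _
    refine this.congr_of_eventuallyEq (Eventually.of_forall fun V => ?_)
    simp [inner_sub_right]
  have h3 : HasFDerivAt (fun V : EuclideanSpace ℝ (Fin N) => (ρ / 2) * ‖V - c‖ ^ 2)
      ((ρ / 2) • (2 • ((innerSL ℝ (V₀ - c)).comp (ContinuousLinearMap.id ℝ _)))) V₀ :=
    hsub.norm_sq.const_mul (ρ / 2)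
  set w := gradient h V₀ + P + ρ • (V₀ - c) with hw
  have hD : HasFDerivAt g (innerSL ℝ w) V₀ := by
    have := (((hasFDerivAt_const a V₀).add h1).add h2).add h3
    refine HasFDerivAt.congr_fderiv this ?_; symm
    ext y
    simp only [ContinuousLinearMap.add_apply, ContinuousLinearMap.zero_apply,
      ContinuousLinearMap.smul_apply, ContinuousLinearMap.coe_comp',
      Function.comp_apply, ContinuousLinearMap.coe_id', id_eq, innerSL_apply_apply,
      InnerProductSpace.toDual_apply_apply, hw, inner_add_left, inner_smul_left,
      ContinuousLinearMap.coe_smul', Pi.smul_apply, smul_eq_mul, two_smul]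
    rw [RCLike.conj_to_real]
    ring
  have hloc : IsLocalMin g V₀ := Filter.Eventually.of_forall hmin
  have hzero : innerSL ℝ w = 0 := hloc.hasFDerivAt_eq_zero hD
  have : ⟪w, w⟫ = (0 : ℝ) := by
    have := congrFun (congrArg (fun (L : _ →L[ℝ] ℝ) => (L : _ → ℝ)) hzero) w
    simpa using this
  exact inner_self_eq_zero.mp this

theorem admm_multiplier_diff_bound
    {M N : ℕ} (H : Matrix (Fin N) (Fin M) ℝ) (ρ Lh : ℝ)
    (hρ : 0 < ρ) (hLh : 0 < Lh)
    (f : EuclideanSpace ℝ (Fin M) → ℝ) (h : EuclideanSpace ℝ (Fin N) → ℝ)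
    (hdiff : Differentiable ℝ h)
    (hlip : ∀ V W : EuclideanSpace ℝ (Fin N),
      ‖gradient h V - gradient h W‖ ≤ Lh * ‖V - W‖)
    (U : ℕ → EuclideanSpace ℝ (Fin M)) (V P : ℕ → EuclideanSpace ℝ (Fin N))
    (hUK : ∀ k, U k ∈ Kbox M)
    (hUmin : ∀ k, ∀ U' ∈ Kbox M,
      lagr H ρ f h (U (k+1)) (V k) (P k) ≤ lagr H ρ f h U' (V k) (P k))
    (hVmin : ∀ k, ∀ V' : EuclideanSpace ℝ (Fin N),
      lagr H ρ f h (U (k+1)) (V (k+1)) (P k) ≤ lagr H ρ f h (U (k+1)) V' (P k))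
    (hPup : ∀ k, P (k+1) = P k + ρ • (V (k+1) - mvec H (U (k+1))))
    :
    ∀ k : ℕ, 1 ≤ k → ‖P (k+1) - P k‖ ≤ Lh * ‖V (k+1) - V k‖ := by
  have key : ∀ k : ℕ, P (k+1) = -gradient h (V (k+1)) := by
    intro k
    have hfo := grad_eq_zero_of_min ρ h hdiff (mvec H (U (k+1))) (P k) (V (k+1))
      (f (U (k+1))) (fun V' => hVmin k V')
    have := hPup k
    rw [this]
    have : P k + ρ • (V (k+1) - mvec H (U (k+1))) =
        (gradient h (V (k+1)) + P k + ρ • (V (k+1) - mvec H (U (k+1))))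
          - gradient h (V (k+1)) := by abel
    rw [this, hfo]; abel
  intro k hk
  obtain ⟨j, rfl⟩ := Nat.exists_eq_add_of_le hk
  have e1 := key (1 + j)
  have e2 : P (1 + j) = -gradient h (V (1 + j)) := by
    cases j with
    | zero => simpa using key 0
    | succ n =>
      have : 1 + (n + 1) = (n + 1) + 1 := Nat.add_comm _ _
      rw [this]; exact key (n + 1)
  rw [e1, e2]
  have : -gradient h (V (1 + j + 1)) - -gradient h (V (1 + j)) =
      -(gradient h (V (1 + j + 1)) - gradient h (V (1 + j))) := by abel
  rw [this, norm_neg]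
  exact hlip _ _
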